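/- For the matrix algebra Mat_n over an algebraically closed field, the characteristic polynomial at a point F ∈ Mat_n* (identified with a matrix via the trace pairing) equals (−1)^{n(n−1)/2} det(F) (λ+μ)^n ∏_{i≠j} (λ α_i + μ α_j), where α_1,…,α_n are the eigenvalues of F. -/

import Mathlib

open Matrix MvPolynomial Equiv Finset Kronecker

section Aux

variable {k : Type*} [Field k]

lemma card_lt_pairs (n : ℕ) :
    (Finset.univ.filter fun p : Fin n × Fin n => p.1 < p.2).card = n * (n - 1) / 2 := by
  have hcard : (Finset.univ.filter fun p : Fin n × Fin n => p.1 < p.2).card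
      = (Finset.univ.filter fun p : Fin n × Fin n => p.2 < p.1).card := by
    apply Finset.card_nbij (fun p => p.swap)
    · intro p hp; simp_all
    · intro p hp q hq h; exact Prod.swap_injective h
    · intro p hp; exact ⟨p.swap, by simp_all, by simp⟩
  have hunion : (Finset.univ.filter fun p : Fin n × Fin n => p.1 < p.2)
      ∪ (Finset.univ.filter fun p : Fin n × Fin n => p.2 < p.1)
      = Finset.univ.filter fun p : Fin n × Fin n => p.1 ≠ p.2 := by
    ext p
    simp only [Finset.mem_union, Finset.mem_filter, Finset.mem_univ, true_and]
    constructor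
    · rintro (h|h) <;> omega
    · intro h
      rcases lt_or_gt_of_ne (show p.1 ≠ p.2 from h) with h'|h'
      · exact Or.inl h'
      · exact Or.inr h'
  have hdisj : Disjoint (Finset.univ.filter fun p : Fin n × Fin n => p.1 < p.2)
      (Finset.univ.filter fun p : Fin n × Fin n => p.2 < p.1) := by
    rw [Finset.disjoint_filter]; intro p _ h1 h2; exact absurd h2 (not_lt.2 h1.le)
  have hoff : (Finset.univ.filter fun p : Fin n × Fin n => p.1 ≠ p.2).card = n * n - n := by
    have : (Finset.univ.filter fun p : Fin n × Fin n => p.1 ≠ p.2)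
        = (Finset.univ : Finset (Fin n)).offDiag := by
      ext p; simp [Finset.mem_offDiag]
    rw [this, Finset.offDiag_card]; simp
  have := Finset.card_union_of_disjoint hdisj
  rw [hunion, hoff, ← hcard] at this
  have h2 : n * (n-1) = n * n - n := by cases n <;> simp [Nat.mul_sub_one, Nat.succ_sub_one, Nat.mul_succ]
  omega

lemma swap_list_prod {n : ℕ} (L : List (Fin n × Fin n)) (hnd : L.Nodup)
    (hlt : ∀ p ∈ L, p.1 < p.2) (x : Fin n × Fin n) :
    (L.map fun p => Equiv.swap p p.swap).prod x
      = if x ∈ L ∨ x.swap ∈ L then x.swap else x := by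
  induction L with
  | nil => simp
  | cons p L ih =>
    have hp : p.1 < p.2 := hlt p (by simp)
    have hndL : L.Nodup := (List.nodup_cons.1 hnd).2
    have hpL : p ∉ L := (List.nodup_cons.1 hnd).1
    have hltL : ∀ q ∈ L, q.1 < q.2 := fun q hq => hlt q (by simp [hq])
    rw [List.map_cons, List.prod_cons, Equiv.Perm.mul_apply, ih hndL hltL]
    by_cases h1 : x ∈ L ∨ x.swap ∈ L
    · rw [if_pos h1]
      have hx1 : x.swap ≠ p := by
        rintro rfl
        rcases h1 with h | h
        · have h2 := hltL _ h
          rw [Prod.fst_swap, Prod.snd_swap] at hp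
          exact absurd h2 (not_lt.2 hp.le)
        · exact hpL h
      have hx2 : x.swap ≠ p.swap := by
        intro h
        have hxp : x = p := Prod.swap_injective h
        subst hxp
        rcases h1 with h | h
        · exact hpL h
        · have h2 := hltL _ h
          rw [Prod.fst_swap, Prod.snd_swap] at h2
          exact absurd h2 (not_lt.2 hp.le)
      rw [Equiv.swap_apply_of_ne_of_ne hx1 hx2, if_pos]
      rcases h1 with h | h
      · exact Or.inl (List.mem_cons_of_mem _ h)
      · exact Or.inr (List.mem_cons_of_mem _ h)
    · rw [if_neg h1]
      push_neg at h1
      by_cases hxp : x = p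
      · subst hxp; simp
      · by_cases hxps : x = p.swap
        · subst hxps
          rw [Equiv.swap_apply_right, if_pos]
          · rw [Prod.swap_swap]
          · exact Or.inr (by rw [Prod.swap_swap]; exact List.mem_cons_self)
        · rw [Equiv.swap_apply_of_ne_of_ne hxp hxps, if_neg]
          simp only [List.mem_cons, not_or]
          refine ⟨⟨hxp, h1.1⟩, ⟨fun h => hxps ?_, h1.2⟩⟩
          rw [← h, Prod.swap_swap]

lemma sign_swap_all {n : ℕ} :
    Equiv.Perm.sign (Equiv.prodComm (Fin n) (Fin n)) = (-1 : ℤˣ) ^ (n * (n-1) / 2) := by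
  classical
  set L : List (Fin n × Fin n) :=
    (Finset.univ.filter fun p : Fin n × Fin n => p.1 < p.2).toList with hL
  have hnd : L.Nodup := Finset.nodup_toList _
  have hmem : ∀ x : Fin n × Fin n, x ∈ L ↔ x.1 < x.2 := by
    intro x; rw [hL, Finset.mem_toList, Finset.mem_filter]; simp
  have hlt : ∀ p ∈ L, p.1 < p.2 := fun p hp => (hmem p).1 hp
  have hprod : (L.map fun p => Equiv.swap p p.swap).prod
      = (Equiv.prodComm (Fin n) (Fin n) : Equiv.Perm (Fin n × Fin n)) := by
    apply Equiv.ext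
    intro x
    rw [swap_list_prod L hnd hlt x]
    by_cases h : x.1 = x.2
    · rw [if_neg]
      · simp [Equiv.prodComm, Prod.swap, ← h, Prod.ext_iff]
      · rw [hmem, hmem, Prod.fst_swap, Prod.snd_swap, h]
        simp
    · rw [if_pos]
      · rfl
      · rw [hmem, hmem, Prod.fst_swap, Prod.snd_swap]
        rcases lt_or_gt_of_ne h with h' | h'
        · exact Or.inl h'
        · exact Or.inr h'
  rw [← hprod, Equiv.Perm.sign_prod_list_swap, List.length_map]
  · rw [hL, Finset.length_toList, card_lt_pairs]
  · intro g hg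
    simp only [List.mem_map] at hg
    obtain ⟨p, hpL, rfl⟩ := hg
    exact ⟨p, p.swap, fun h => absurd (congrArg Prod.fst h) (by
      have := hlt p hpL; simp only [Prod.fst_swap]; exact ne_of_lt this), rfl⟩

lemma prod_fun_multiset_eq {M : Type*} [CommMonoid M] {n : ℕ} {d e : Fin n → k}
    (h : (Finset.univ.val.map d) = Finset.univ.val.map e) (f : k → M) :
    ∏ i, f (d i) = ∏ i, f (e i) := by
  have key : ∀ (v : Fin n → k),
      (Finset.univ.val.map fun i => f (v i)) = (Finset.univ.val.map v).map f :=
    fun v => (Multiset.map_map f v _).symm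
  rw [Finset.prod_eq_multiset_prod, Finset.prod_eq_multiset_prod, key, key, h]

lemma roots_prod_lin {n : ℕ} (e : Fin n → k) :
    (∏ i, (Polynomial.X - Polynomial.C (e i))).roots = Finset.univ.val.map e := by
  rw [Finset.prod_eq_multiset_prod]
  have h : Multiset.map (fun i => Polynomial.X - Polynomial.C (e i)) Finset.univ.val
      = Multiset.map (fun a => Polynomial.X - Polynomial.C a) (Multiset.map e Finset.univ.val) := by
    rw [Multiset.map_map]; rfl
  rw [h, Polynomial.roots_multiset_prod_X_sub_C]

lemma charpoly_conj {n : ℕ} (P Q T : Matrix (Fin n) (Fin n) k)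
    (hPQ : P * Q = 1) (hQP : Q * P = 1) : (P * T * Q).charpoly = T.charpoly := by
  classical
  have hsc : ∀ M : Matrix (Fin n) (Fin n) k,
      Matrix.charmatrix M = (Polynomial.X : Polynomial k) • (1 : Matrix (Fin n) (Fin n) (Polynomial k)) - M.map Polynomial.C := by
    intro M
    ext i j
    by_cases h : i = j <;>
      simp [Matrix.charmatrix, h, Matrix.one_apply, Matrix.scalar, Matrix.diagonal]
  have hmap : ∀ A B : Matrix (Fin n) (Fin n) k,
      (A * B).map (Polynomial.C : k →+* Polynomial k) = A.map Polynomial.C * B.map Polynomial.C :=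
    fun A B => Matrix.map_mul
  have hone : (1 : Matrix (Fin n) (Fin n) k).map (Polynomial.C : k →+* Polynomial k) = 1 :=
    Matrix.map_one _ (map_zero _) (map_one _)
  have hch : Matrix.charmatrix (P * T * Q)
      = P.map Polynomial.C * Matrix.charmatrix T * Q.map Polynomial.C := by
    rw [hsc, hsc, Matrix.mul_sub, Matrix.sub_mul, hmap, hmap]
    congr 1
    rw [Matrix.mul_smul, Matrix.mul_one, Matrix.smul_mul, ← hmap, hPQ, hone]
  rw [Matrix.charpoly, Matrix.charpoly, hch, Matrix.det_mul, Matrix.det_mul]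
  have : Matrix.det (P.map (Polynomial.C : k →+* Polynomial k))
      * Matrix.det (Q.map Polynomial.C) = 1 := by
    rw [mul_comm, ← Matrix.det_mul, ← hmap, hQP, hone, Matrix.det_one]
  calc Matrix.det (P.map Polynomial.C) * (Matrix.charmatrix T).det * Matrix.det (Q.map Polynomial.C)
      = (Matrix.charmatrix T).det * (Matrix.det (P.map Polynomial.C) * Matrix.det (Q.map Polynomial.C)) := by ring
    _ = (Matrix.charmatrix T).det := by rw [this, mul_one]

end Aux

section Triang

variable {k : Type*} [Field k] [IsAlgClosed k]

theorem exists_triang : ∀ (n : ℕ) (F : Matrix (Fin n) (Fin n) k),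
    ∃ P Q T : Matrix (Fin n) (Fin n) k,
      P * Q = 1 ∧ Q * P = 1 ∧ (∀ i j, j < i → T i j = 0) ∧ F = P * T * Q := by
  intro n
  induction n with
  | zero =>
    intro F
    exact ⟨1, 1, F, by simp, by simp, fun i => i.elim0, by simp⟩
  | succ n ih =>
    intro F
    classical
    -- eigenvector
    set V := Fin (n+1) → k
    let f : Module.End k V := Matrix.toLin' F
    obtain ⟨a, ha⟩ := Module.End.exists_eigenvalue f
    obtain ⟨v, hv⟩ := ha.exists_hasEigenvector
    have hv0 : v ≠ 0 := hv.2
    have hfv : F.mulVec v = a • v := by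
      have := hv.apply_eq_smul
      rwa [show f v = F.mulVec v from Matrix.toLin'_apply F v] at this
    -- basis with b 0 = v
    have hli : LinearIndepOn k id ({v} : Set V) := (linearIndepOn_singleton_iff k).2 hv0
    let b0 : Module.Basis _ k V := Module.Basis.extend hli
    have hvmem : v ∈ hli.extend (Set.subset_univ _) :=
      hli.subset_extend _ (Set.mem_singleton v)
    have hcard : Fintype.card (hli.extend (Set.subset_univ _) : Set V) = n + 1 := by
      rw [← Module.finrank_eq_card_basis b0, Module.finrank_fintype_fun_eq_card,
        Fintype.card_fin]
    let e0 : Fin (n+1) ≃ (hli.extend (Set.subset_univ _) : Set V) :=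
      Fintype.equivOfCardEq (by rw [hcard, Fintype.card_fin])
    let e : Fin (n+1) ≃ (hli.extend (Set.subset_univ _) : Set V) :=
      e0.trans (Equiv.swap (e0 0) ⟨v, hvmem⟩)
    let b : Module.Basis (Fin (n+1)) k V := b0.reindex e.symm
    have hb : ∀ i, b i = b0 (e i) := by
      intro i; rw [Module.Basis.reindex_apply, Equiv.symm_symm]
    have hb0 : b 0 = v := by
      rw [hb, show e 0 = ⟨v, hvmem⟩ from by simp [e, Equiv.swap_apply_left]]
      exact Module.Basis.extend_apply_self hli ⟨v, hvmem⟩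
    let B : Module.Basis (Fin (n+1)) k V := Pi.basisFun k (Fin (n+1))
    let P : Matrix (Fin (n+1)) (Fin (n+1)) k := B.toMatrix ⇑b
    let Q : Matrix (Fin (n+1)) (Fin (n+1)) k := b.toMatrix ⇑B
    have hPQ : P * Q = 1 := B.toMatrix_mul_toMatrix_flip b
    have hQP : Q * P = 1 := b.toMatrix_mul_toMatrix_flip B
    have hPcol : ∀ i, P i 0 = v i := by
      intro i
      rw [show P i 0 = B.repr (b 0) i from Module.Basis.toMatrix_apply B ⇑b i 0, hb0]
      rw [Pi.basisFun_repr]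
    -- the column structure of G
    set G := Q * F * P with hGdef
    have hPv : P.mulVec (Pi.single 0 1) = v := by
      rw [Matrix.mulVec_single_one]
      funext i; rw [Matrix.col_apply, hPcol i]
    have hGcol : ∀ i, G i 0 = if i = 0 then a else 0 := by
      have h1 : G.mulVec (Pi.single (0 : Fin (n+1)) (1 : k))
          = a • (Pi.single (0 : Fin (n+1)) (1 : k) : Fin (n+1) → k) := by
        rw [hGdef, ← Matrix.mulVec_mulVec, ← Matrix.mulVec_mulVec, hPv, hfv,
          Matrix.mulVec_smul, ← hPv, Matrix.mulVec_mulVec, hQP, Matrix.one_mulVec]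
      rw [Matrix.mulVec_single_one] at h1
      intro i
      have := congrFun h1 i
      simp only [mul_one, Pi.smul_apply, smul_eq_mul, Matrix.col_apply] at this
      rw [this]
      by_cases h : i = 0 <;> simp [h, Pi.single_apply]
    -- blocks
    let emb : (Fin 1 ⊕ Fin n) ≃ Fin (n+1) := finSumFinEquiv.trans (finCongr (Nat.add_comm 1 n))
    have hemb0 : emb (Sum.inl 0) = 0 := by
      simp [emb, finSumFinEquiv_apply_left]
      rfl
    have hembr : ∀ i : Fin n, (emb (Sum.inr i) : Fin (n+1)) ≠ 0 := by
      intro i h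
      have : (emb (Sum.inr i)).val = 1 + i.val := by
        simp [emb, finSumFinEquiv_apply_right]
        omega
      rw [h] at this
      simp at this
      omega
    set Ghat := G.submatrix emb emb with hGhat
    obtain ⟨P₁, Q₁, T₁, hPQ₁, hQP₁, hT₁, hG'⟩ := ih Ghat.toBlocks₂₂
    let Pb : Matrix (Fin 1 ⊕ Fin n) (Fin 1 ⊕ Fin n) k := fromBlocks 1 0 0 P₁
    let Qb : Matrix (Fin 1 ⊕ Fin n) (Fin 1 ⊕ Fin n) k := fromBlocks 1 0 0 Q₁
    have hPbQb : Pb * Qb = 1 := by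
      rw [show Pb * Qb = fromBlocks 1 0 0 (P₁ * Q₁) from by
        simp [Pb, Qb, Matrix.fromBlocks_multiply], hPQ₁, Matrix.fromBlocks_one]
    have hQbPb : Qb * Pb = 1 := by
      rw [show Qb * Pb = fromBlocks 1 0 0 (Q₁ * P₁) from by
        simp [Pb, Qb, Matrix.fromBlocks_multiply], hQP₁, Matrix.fromBlocks_one]
    set That := Qb * Ghat * Pb with hThat
    refine ⟨P * Pb.submatrix emb.symm emb.symm, Qb.submatrix emb.symm emb.symm * Q,
      That.submatrix emb.symm emb.symm, ?_, ?_, ?_, ?_⟩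
    · rw [mul_assoc, ← mul_assoc (Pb.submatrix emb.symm emb.symm),
        Matrix.submatrix_mul_equiv, hPbQb]
      simp [Matrix.submatrix_one_equiv, hPQ]
    · rw [mul_assoc, ← mul_assoc Q, hQP, one_mul, Matrix.submatrix_mul_equiv, hQbPb]
      simp [Matrix.submatrix_one_equiv]
    · -- triangularity
      intro i j hji
      rw [Matrix.submatrix_apply]
      have hi := emb.apply_symm_apply i
      have hj := emb.apply_symm_apply j
      rcases hsi : emb.symm i with i' | i' <;> rcases hsj : emb.symm j with j' | j'
      · -- i = emb (inl i'), so i = 0; j < 0 absurd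
        rw [hsi] at hi
        have : i = 0 := by rw [← hi, show i' = 0 from Subsingleton.elim _ _, hemb0]
        rw [this] at hji
        exact absurd hji (Fin.not_lt_zero j)
      · rw [hsi] at hi
        have : i = 0 := by rw [← hi, show i' = 0 from Subsingleton.elim _ _, hemb0]
        rw [this] at hji
        exact absurd hji (Fin.not_lt_zero j)
      · -- lower-left block
        have hG21 : Ghat.toBlocks₂₁ = 0 := by
          ext s t
          rw [Matrix.toBlocks₂₁]
          simp only [Matrix.of_apply, Matrix.zero_apply]
          rw [hGhat, Matrix.submatrix_apply,
            show emb (Sum.inl t) = 0 from by rw [show t = 0 from Subsingleton.elim _ _, hemb0],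
            hGcol, if_neg (hembr s)]
        have : That (Sum.inr i') (Sum.inl j') = (Q₁ * Ghat.toBlocks₂₁) i' j' := by
          rw [hThat, ← Matrix.fromBlocks_toBlocks Ghat]
          simp [Pb, Qb, Matrix.fromBlocks_multiply]
        rw [this, hG21]
        simp
      · -- lower-right block
        have hentry : That (Sum.inr i') (Sum.inr j') = (Q₁ * Ghat.toBlocks₂₂ * P₁) i' j' := by
          rw [hThat, ← Matrix.fromBlocks_toBlocks Ghat]
          simp [Pb, Qb, Matrix.fromBlocks_multiply]
        have hQGP : Q₁ * Ghat.toBlocks₂₂ * P₁ = T₁ := by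
          rw [hG']
          have h9 : Q₁ * (P₁ * T₁ * Q₁) * P₁ = (Q₁ * P₁) * T₁ * (Q₁ * P₁) := by
            simp only [mul_assoc]
          rw [h9, hQP₁, one_mul, mul_one]
        rw [hentry, hQGP]
        apply hT₁
        -- j' < i'
        rw [hsi] at hi; rw [hsj] at hj
        have hvi : (i : Fin (n+1)).val = 1 + i'.val := by
          rw [← hi]; simp [emb, finSumFinEquiv_apply_right]; omega
        have hvj : (j : Fin (n+1)).val = 1 + j'.val := by
          rw [← hj]; simp [emb, finSumFinEquiv_apply_right]; omega
        have : j.val < i.val := hji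
        rw [hvi, hvj] at this
        exact (Fin.lt_iff_val_lt_val).2 (by omega)
    · -- F = P' T Q'
      have hPTQ : Pb.submatrix emb.symm emb.symm * That.submatrix emb.symm emb.symm *
          Qb.submatrix emb.symm emb.symm = G := by
        rw [Matrix.submatrix_mul_equiv, Matrix.submatrix_mul_equiv, hThat]
        have h9 : Pb * (Qb * Ghat * Pb) * Qb = Pb * Qb * Ghat * (Pb * Qb) := by
          simp only [mul_assoc]
        rw [h9, hPbQb, one_mul, mul_one, hGhat, Matrix.submatrix_submatrix]
        simp [Equiv.self_comp_symm]
      have key : P * Pb.submatrix emb.symm emb.symm * That.submatrix emb.symm emb.symm *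
          (Qb.submatrix emb.symm emb.symm * Q) = F := by
        calc P * Pb.submatrix emb.symm emb.symm * That.submatrix emb.symm emb.symm *
              (Qb.submatrix emb.symm emb.symm * Q)
            = P * (Pb.submatrix emb.symm emb.symm * That.submatrix emb.symm emb.symm *
              Qb.submatrix emb.symm emb.symm) * Q := by simp only [mul_assoc]
          _ = P * G * Q := by rw [hPTQ]
          _ = (P * Q) * F * (P * Q) := by rw [hGdef]; simp only [mul_assoc]
          _ = F := by rw [hPQ, one_mul, mul_one]
      exact key.symm

end Triang
/-- The characteristic polynomial of the matrix algebra `Mat_n` at a point `F`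
(identified with a matrix via the trace pairing) equals
`(−1)^(n(n−1)/2) det F (λ+μ)^n ∏_{i≠j} (λ αᵢ + μ αⱼ)` where `αᵢ` are the eigenvalues of `F`. -/
theorem char_poly_matrix_algebra {k : Type*} [Field k] [IsAlgClosed k] {n : ℕ}
    (F : Matrix (Fin n) (Fin n) k) (α : Fin n → k)
    (hα : F.charpoly = ∏ i, (Polynomial.X - Polynomial.C (α i)))
    (AF : Matrix (Fin n × Fin n) (Fin n × Fin n) k)
    (hAF : ∀ p q : Fin n × Fin n, AF p q =
      Matrix.trace (F * (Matrix.single p.1 p.2 (1 : k) *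
        Matrix.single q.1 q.2 (1 : k)))) :
    Matrix.det ((X 0 : MvPolynomial (Fin 2) k) •
          AF.map (MvPolynomial.C : k → MvPolynomial (Fin 2) k)
        + (X 1 : MvPolynomial (Fin 2) k) •
          AFᵀ.map (MvPolynomial.C : k → MvPolynomial (Fin 2) k))
      = (-1 : MvPolynomial (Fin 2) k) ^ (n * (n - 1) / 2) * MvPolynomial.C F.det *
        (X 0 + X 1) ^ n *
        ∏ p ∈ Finset.univ.filter (fun p : Fin n × Fin n => p.1 ≠ p.2),
          (MvPolynomial.C (α p.1) * X 0 + MvPolynomial.C (α p.2) * X 1) := by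
  classical
  -- notation
  set R := MvPolynomial (Fin 2) k
  -- the trace entries
  have hAF' : ∀ i j l m : Fin n, AF (i,j) (l,m) = if j = l then F m i else 0 := by
    intro i j l m
    rw [hAF]
    dsimp only
    by_cases h : j = l
    · subst h
      rw [Matrix.single_mul_single_same (c := (1:k)) (i := i) (j := j) (k := m), one_mul]
      simp only [Matrix.trace, Matrix.diag, Matrix.mul_apply, Matrix.single,
        Matrix.of_apply, mul_ite, mul_one, mul_zero, ite_and]
      rw [Finset.sum_comm]
      simp [Finset.sum_ite_eq, eq_comm]
    · rw [Matrix.single_mul_single_of_ne (c := (1:k)) i j l h, Matrix.mul_zero, Matrix.trace_zero, if_neg h]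
  -- triangularization
  obtain ⟨P, Q, T, hPQ, hQP, hTtri, hFPTQ⟩ := exists_triang n F
  set d : Fin n → k := fun i => T i i with hd
  have hTblock : T.BlockTriangular id := fun i j h => hTtri i j h
  have hcp : F.charpoly = T.charpoly := by
    rw [hFPTQ]; exact charpoly_conj P Q T hPQ hQP
  have hprodeq : (∏ i, (Polynomial.X - Polynomial.C (α i)))
      = ∏ i, (Polynomial.X - Polynomial.C (d i)) := by
    rw [← hα, hcp, Matrix.charpoly_of_upperTriangular T hTblock]
  have hms : Finset.univ.val.map α = Finset.univ.val.map d := by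
    have h := congrArg Polynomial.roots hprodeq
    rwa [roots_prod_lin, roots_prod_lin] at h
  -- determinant of F
  have hdetF : F.det = ∏ i, α i := by
    rw [Matrix.det_eq_prod_roots_charpoly, hα, roots_prod_lin,
      ← Finset.prod_eq_multiset_prod]
  -- matrices over R
  set F' : Matrix (Fin n) (Fin n) R := F.map ⇑(MvPolynomial.C : k →+* R) with hF'def
  set P' : Matrix (Fin n) (Fin n) R := P.map ⇑(MvPolynomial.C : k →+* R)
  set Q' : Matrix (Fin n) (Fin n) R := Q.map ⇑(MvPolynomial.C : k →+* R)
  set T' : Matrix (Fin n) (Fin n) R := T.map ⇑(MvPolynomial.C : k →+* R)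
  have hmap : ∀ A B : Matrix (Fin n) (Fin n) k,
      (A * B).map ⇑(MvPolynomial.C : k →+* R)
        = A.map ⇑(MvPolynomial.C : k →+* R) * B.map ⇑(MvPolynomial.C : k →+* R) :=
    fun A B => Matrix.map_mul
  have hone : (1 : Matrix (Fin n) (Fin n) k).map ⇑(MvPolynomial.C : k →+* R) = 1 :=
    Matrix.map_one _ (map_zero _) (map_one _)
  have hP'Q' : P' * Q' = 1 := by rw [← hmap, hPQ, hone]
  have hQ'P' : Q' * P' = 1 := by rw [← hmap, hQP, hone]
  have hF' : F' = P' * T' * Q' := by rw [hF'def, hFPTQ, hmap, hmap]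
  -- the Kronecker form
  set N : Matrix (Fin n × Fin n) (Fin n × Fin n) R :=
    (X 0 : R) • ((1 : Matrix (Fin n) (Fin n) R) ⊗ₖ F'ᵀ) + (X 1 : R) • (F' ⊗ₖ (1 : Matrix (Fin n) (Fin n) R))
    with hNdef
  set σ : Equiv.Perm (Fin n × Fin n) := (Equiv.prodComm (Fin n) (Fin n)) with hσ
  have hM : (X 0 : R) • AF.map (MvPolynomial.C : k → R)
        + (X 1 : R) • AFᵀ.map (MvPolynomial.C : k → R) = N.submatrix σ id := by
    refine Matrix.ext fun pq rs => ?_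
    obtain ⟨i, j⟩ := pq
    obtain ⟨l, m⟩ := rs
    simp only [Matrix.add_apply, Matrix.smul_apply, Matrix.map_apply, Matrix.transpose_apply,
      Matrix.submatrix_apply, id_eq, hNdef, Matrix.kroneckerMap_apply, hσ,
      Equiv.prodComm_apply, Prod.swap_prod_mk, smul_eq_mul]
    rw [hAF' i j l m, hAF' l m i j]
    simp only [Matrix.one_apply, hF'def, Matrix.map_apply, Matrix.transpose_apply]
    rcases eq_or_ne m i with h2 | h2
    · subst h2; by_cases h1 : j = l <;> simp [h1]
    · have h2' : i ≠ m := fun hc => h2 hc.symm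
      by_cases h1 : j = l <;> simp [h1, h2, h2']
  -- the triangular form
  set Tr : Matrix (Fin n × Fin n) (Fin n × Fin n) R :=
    (X 0 : R) • ((1 : Matrix (Fin n) (Fin n) R) ⊗ₖ T'ᵀ) + (X 1 : R) • (T' ⊗ₖ (1 : Matrix (Fin n) (Fin n) R))
    with hTrdef
  have kk : ∀ (A B C D : Matrix (Fin n) (Fin n) R),
      (A ⊗ₖ B) * (C ⊗ₖ D) = (A * C) ⊗ₖ (B * D) :=
    fun A B C D => (Matrix.mul_kronecker_mul A C B D).symm
  have h1 : (P' ⊗ₖ Q'ᵀ) * ((1 : Matrix (Fin n) (Fin n) R) ⊗ₖ T'ᵀ) * (Q' ⊗ₖ P'ᵀ)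
      = (1 : Matrix (Fin n) (Fin n) R) ⊗ₖ F'ᵀ := by
    have e1 : P' * 1 * Q' = 1 := by rw [Matrix.mul_one, hP'Q']
    have e2 : Q'ᵀ * T'ᵀ * P'ᵀ = F'ᵀ := by
      rw [hF', Matrix.transpose_mul, Matrix.transpose_mul, mul_assoc]
    rw [kk, kk, e1, e2]
  have h2 : (P' ⊗ₖ Q'ᵀ) * (T' ⊗ₖ (1 : Matrix (Fin n) (Fin n) R)) * (Q' ⊗ₖ P'ᵀ)
      = F' ⊗ₖ (1 : Matrix (Fin n) (Fin n) R) := by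
    have e3 : P' * T' * Q' = F' := hF'.symm
    have e4 : Q'ᵀ * 1 * P'ᵀ = 1 := by
      rw [Matrix.mul_one, ← Matrix.transpose_mul, hP'Q', Matrix.transpose_one]
    rw [kk, kk, e3, e4]
  have hconj : (P' ⊗ₖ Q'ᵀ) * Tr * (Q' ⊗ₖ P'ᵀ) = N := by
    rw [hTrdef, Matrix.mul_add, Matrix.add_mul, Matrix.mul_smul, Matrix.smul_mul,
      Matrix.mul_smul, Matrix.smul_mul, h1, h2, hNdef]
  have hUV : (P' ⊗ₖ Q'ᵀ) * (Q' ⊗ₖ P'ᵀ) = 1 := by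
    rw [kk, hP'Q', ← Matrix.transpose_mul, hP'Q',
      Matrix.transpose_one, Matrix.one_kronecker_one]
  have hdetN : N.det = Tr.det := by
    rw [← hconj, Matrix.det_mul, Matrix.det_mul]
    calc (P' ⊗ₖ Q'ᵀ).det * Tr.det * (Q' ⊗ₖ P'ᵀ).det
        = Tr.det * ((P' ⊗ₖ Q'ᵀ).det * (Q' ⊗ₖ P'ᵀ).det) := by ring
      _ = Tr.det * ((P' ⊗ₖ Q'ᵀ) * (Q' ⊗ₖ P'ᵀ)).det := by rw [Matrix.det_mul]
      _ = Tr.det := by rw [hUV, Matrix.det_one, mul_one]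
  -- determinant of the triangular form
  set e : Lex (Fin n × (Fin n)ᵒᵈ) ≃ (Fin n × Fin n) :=
    ⟨fun x => ((ofLex x).1, OrderDual.ofDual (ofLex x).2),
     fun p => toLex (p.1, OrderDual.toDual p.2), fun _ => rfl, fun _ => rfl⟩ with he
  have hTrApply : ∀ a b c f : Fin n,
      Tr (a, b) (c, f) = (X 0 : R) * ((if a = c then 1 else 0) * MvPolynomial.C (T f b))
        + (X 1 : R) * (MvPolynomial.C (T a c) * (if b = f then 1 else 0)) := by
    intro a b c f
    simp [hTrdef, Matrix.kroneckerMap_apply, Matrix.one_apply, smul_eq_mul,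
      show T' = T.map ⇑(MvPolynomial.C : k →+* R) from rfl, Matrix.map_apply]
  have htri : (Tr.submatrix e e).BlockTriangular id := by
    intro x y hxy
    have hlt := (Prod.Lex.lt_iff (x := y) (y := x)).1 hxy
    rw [Matrix.submatrix_apply]
    have hex : e x = ((ofLex x).1, OrderDual.ofDual (ofLex x).2) := rfl
    have hey : e y = ((ofLex y).1, OrderDual.ofDual (ofLex y).2) := rfl
    rw [hex, hey, hTrApply]
    rcases hlt with h | ⟨h1, h2⟩
    · rw [if_neg (by exact fun hc => absurd hc.symm (ne_of_lt h)),
        hTtri _ _ h, MvPolynomial.C_0]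
      ring
    · have h2' : OrderDual.ofDual (ofLex x).2 < OrderDual.ofDual (ofLex y).2 := h2
      rw [if_pos h1.symm, hTtri _ _ h2', if_neg (ne_of_lt h2'), MvPolynomial.C_0]
      ring
  have hdetTr : Tr.det = ∏ p : Fin n × Fin n,
      ((X 0 : R) * MvPolynomial.C (d p.2) + (X 1 : R) * MvPolynomial.C (d p.1)) := by
    rw [← Matrix.det_submatrix_equiv_self e Tr, Matrix.det_of_upperTriangular htri]
    simp only [Matrix.submatrix_apply]
    rw [Equiv.prod_comp e (fun p => Tr p p)]
    apply Finset.prod_congr rfl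
    intro p _
    rw [show Tr p p = Tr (p.1, p.2) (p.1, p.2) from rfl, hTrApply]
    simp [hd]
  -- exchange the diagonal for the eigenvalues
  have hdiagprod : (∏ p : Fin n × Fin n,
        ((X 0 : R) * MvPolynomial.C (d p.2) + (X 1 : R) * MvPolynomial.C (d p.1)))
      = ∏ p : Fin n × Fin n,
        ((X 0 : R) * MvPolynomial.C (α p.2) + (X 1 : R) * MvPolynomial.C (α p.1)) := by
    rw [← Finset.univ_product_univ, Finset.prod_product, Finset.prod_product]
    have step1 : ∀ x : k, (∏ j, ((X 0 : R) * MvPolynomial.C (d j) + (X 1 : R) * MvPolynomial.C x))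
        = ∏ j, ((X 0 : R) * MvPolynomial.C (α j) + (X 1 : R) * MvPolynomial.C x) :=
      fun x => prod_fun_multiset_eq hms.symm (fun y => (X 0 : R) * MvPolynomial.C y + (X 1 : R) * MvPolynomial.C x)
    calc (∏ i, ∏ j, ((X 0 : R) * MvPolynomial.C (d j) + (X 1 : R) * MvPolynomial.C (d i)))
        = ∏ i, ∏ j, ((X 0 : R) * MvPolynomial.C (α j) + (X 1 : R) * MvPolynomial.C (d i)) :=
          Finset.prod_congr rfl (fun i _ => step1 (d i))
      _ = ∏ i, ∏ j, ((X 0 : R) * MvPolynomial.C (α j) + (X 1 : R) * MvPolynomial.C (α i)) :=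
          prod_fun_multiset_eq hms.symm
            (fun x => ∏ j, ((X 0 : R) * MvPolynomial.C (α j) + (X 1 : R) * MvPolynomial.C x))
  -- split into diagonal and off-diagonal parts
  have hsplit := Finset.prod_filter_mul_prod_filter_not Finset.univ
    (fun p : Fin n × Fin n => p.1 = p.2)
    (fun p : Fin n × Fin n => (X 0 : R) * MvPolynomial.C (α p.2) + (X 1 : R) * MvPolynomial.C (α p.1))
  have hdiag : (∏ p ∈ Finset.univ.filter (fun p : Fin n × Fin n => p.1 = p.2),
        ((X 0 : R) * MvPolynomial.C (α p.2) + (X 1 : R) * MvPolynomial.C (α p.1)))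
      = MvPolynomial.C F.det * ((X 0 : R) + (X 1 : R)) ^ n := by
    have himg : Finset.univ.filter (fun p : Fin n × Fin n => p.1 = p.2)
        = Finset.image (fun i : Fin n => (i, i)) Finset.univ := by
      ext p
      simp only [Finset.mem_filter, Finset.mem_univ, true_and, Finset.mem_image]
      constructor
      · intro h; exact ⟨p.1, Prod.ext rfl h⟩
      · rintro ⟨i, rfl⟩; rfl
    rw [himg, Finset.prod_image (fun a _ b _ h => (Prod.ext_iff.1 h).1)]
    have : (∏ i : Fin n, ((X 0 : R) * MvPolynomial.C (α i) + (X 1 : R) * MvPolynomial.C (α i)))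
        = ∏ i : Fin n, (MvPolynomial.C (α i) * ((X 0 : R) + (X 1 : R))) :=
      Finset.prod_congr rfl (fun i _ => by ring)
    rw [this, Finset.prod_mul_distrib, Finset.prod_const, Finset.card_univ,
      Fintype.card_fin, ← map_prod, ← hdetF]
  have hoffd : (∏ p ∈ Finset.univ.filter (fun p : Fin n × Fin n => ¬ p.1 = p.2),
        ((X 0 : R) * MvPolynomial.C (α p.2) + (X 1 : R) * MvPolynomial.C (α p.1)))
      = ∏ p ∈ Finset.univ.filter (fun p : Fin n × Fin n => p.1 ≠ p.2),
        (MvPolynomial.C (α p.1) * (X 0 : R) + MvPolynomial.C (α p.2) * (X 1 : R)) := by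
    refine Finset.prod_nbij' Prod.swap Prod.swap ?_ ?_ ?_ ?_ ?_
    · intro p hp; simp only [Finset.mem_filter, Finset.mem_univ, true_and] at hp ⊢
      simp only [Prod.fst_swap, Prod.snd_swap, ne_eq]
      exact fun h => hp h.symm
    · intro p hp; simp only [Finset.mem_filter, Finset.mem_univ, true_and, ne_eq] at hp ⊢
      exact fun h => hp h.symm
    · intro p _; exact Prod.swap_swap p
    · intro p _; exact Prod.swap_swap p
    · intro p _; simp only [Prod.fst_swap, Prod.snd_swap]; ring
  -- assemble
  rw [hM, Matrix.det_permute σ N, hσ, sign_swap_all, hdetN, hdetTr, hdiagprod, ← hsplit,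
    hdiag, hoffd]
  have hcast : ((((-1 : ℤˣ) ^ (n * (n-1) / 2) : ℤˣ) : ℤ) : R) = (-1 : R) ^ (n * (n-1) / 2) := by
    push_cast
    ring
  rw [hcast]
  ring
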